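/- Let G be a simple graph on vertex set Fin n and let h > 0 be a real number such that for every nonempty subset S ⊆ Fin n with |S| ≤ n/2 one has |∂S| ≥ h·|S|. Let p : (Fin n → Bool) → ℝ be a probability distribution symmetric under bitwise negation (p(x) = p(x̄) for all x), and let d be a natural number. If Σ_x p(x)·cut_G(x) ≤ (h/6)·n and p({x : |x| ≤ n/3}) ≤ 12 · 2^{3d/2} · n^{−1/2}, then n ≤ 48² · 8^d. -/

import Mathlib

/-- The number of edges of `G` whose endpoints receive different values under the
Boolean assignment `x` (the "cut" of `x`). -/
def SimpleGraph.cutCard {n : ℕ} (G : SimpleGraph (Fin n)) [DecidableRel G.Adj]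
    (x : Fin n → Bool) : ℕ :=
  (G.edgeFinset.filter (fun e => ¬ (Sym2.map x e).IsDiag)).card

/-- The edge boundary of a set `S` of vertices: edges with exactly one endpoint in `S`. -/
def SimpleGraph.bdryCard {n : ℕ} (G : SimpleGraph (Fin n)) [DecidableRel G.Adj]
    (S : Finset (Fin n)) : ℕ :=
  G.cutCard (fun v => decide (v ∈ S))

/-- The Hamming weight of a Boolean string. -/
def hammingWt {n : ℕ} (x : Fin n → Bool) : ℕ :=
  (Finset.univ.filter (fun j => x j = true)).card

lemma hammingWt_le {n : ℕ} (x : Fin n → Bool) : hammingWt x ≤ n := by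
  simpa [hammingWt] using (Finset.card_filter_le Finset.univ (fun j => x j = true))

lemma hammingWt_not {n : ℕ} (x : Fin n → Bool) :
    hammingWt (fun j => ! x j) = n - hammingWt x := by
  unfold hammingWt
  have he : (Finset.univ.filter fun j => (! x j) = true)
      = Finset.univ \ (Finset.univ.filter fun j => x j = true) := by
    ext j; simp
  rw [he, Finset.card_sdiff_of_subset (Finset.filter_subset _ _)]
  simp

lemma cutCard_not {n : ℕ} (G : SimpleGraph (Fin n)) [DecidableRel G.Adj] (x : Fin n → Bool) :
    G.cutCard (fun j => ! x j) = G.cutCard x := by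
  unfold SimpleGraph.cutCard
  congr 1
  apply Finset.filter_congr
  intro e _
  refine Sym2.inductionOn e ?_
  intro a b
  simp only [Sym2.map_pair_eq, Sym2.mk_isDiag_iff]
  cases x a <;> cases x b <;> simp

lemma cutCard_eq_bdry {n : ℕ} (G : SimpleGraph (Fin n)) [DecidableRel G.Adj] (x : Fin n → Bool) :
    G.cutCard x = G.bdryCard (Finset.univ.filter fun j => x j = true) := by
  unfold SimpleGraph.bdryCard
  congr 1
  funext v
  simp [Finset.mem_filter]

theorem stmt2 (n : ℕ) (G : SimpleGraph (Fin n)) [DecidableRel G.Adj] (h : ℝ)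
    (hh : 0 < h)
    (hCheeger : ∀ S : Finset (Fin n), S.Nonempty → (S.card : ℝ) ≤ n / 2 →
      h * S.card ≤ (G.bdryCard S : ℝ))
    (p : (Fin n → Bool) → ℝ)
    (hp0 : ∀ x, 0 ≤ p x) (hp1 : ∑ x, p x = 1)
    (hsym : ∀ x, p x = p (fun j => ! x j))
    (d : ℕ)
    (hlow : ∑ x, p x * (G.cutCard x : ℝ) ≤ (h / 6) * n)
    (hlight : ∑ x ∈ Finset.univ.filter (fun x => (hammingWt x : ℝ) ≤ n / 3), p x ≤
      12 * (2 : ℝ) ^ ((3 * (d : ℝ)) / 2) * (n : ℝ) ^ (-(1 : ℝ) / 2)) :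
    n ≤ 48 ^ 2 * 8 ^ d := by
  by_cases hn0 : n = 0
  · subst hn0; positivity
  have hn' : (0 : ℝ) < n := by exact_mod_cast Nat.pos_of_ne_zero hn0
  -- key per-string bound
  have main : ∀ y : Fin n → Bool, (n : ℝ) / 3 < hammingWt y → (hammingWt y : ℝ) ≤ n / 2 →
      h * ((n : ℝ) / 3) ≤ (G.cutCard y : ℝ) := by
    intro y hy1 hy2
    set S := Finset.univ.filter (fun j => y j = true) with hS
    have hScard : S.card = hammingWt y := rfl
    have hne : S.Nonempty := by
      refine Finset.card_pos.mp ?_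
      rw [hScard]
      have hpos : (0 : ℝ) < (hammingWt y : ℝ) := lt_of_le_of_lt (by positivity) hy1
      exact_mod_cast hpos
    have hche := hCheeger S hne (by rw [hScard]; exact hy2)
    rw [← cutCard_eq_bdry] at hche
    have : h * ((n : ℝ) / 3) ≤ h * (hammingWt y : ℝ) :=
      mul_le_mul_of_nonneg_left hy1.le hh.le
    rw [hScard] at hche
    linarith
  have key : ∀ x : Fin n → Bool, ¬ ((hammingWt x : ℝ) ≤ n / 3) → (hammingWt x : ℝ) < 2 * n / 3 →
      h * ((n : ℝ) / 3) ≤ (G.cutCard x : ℝ) := by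
    intro x h1 h2
    push_neg at h1
    by_cases hc : (hammingWt x : ℝ) ≤ n / 2
    · exact main x h1 hc
    · push_neg at hc
      have hwle := hammingWt_le x
      have hcast : (hammingWt (fun j => ! x j) : ℝ) = n - hammingWt x := by
        rw [hammingWt_not]; push_cast [Nat.cast_sub hwle]; ring
      have := main (fun j => ! x j) (by rw [hcast]; linarith) (by rw [hcast]; linarith)
      rwa [cutCard_not] at this
  -- the middle set
  set M := Finset.univ.filter (fun x => ¬ ((hammingWt x : ℝ) ≤ n / 3) ∧ (hammingWt x : ℝ) < 2 * n / 3) with hM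
  set A := Finset.univ.filter (fun x => (hammingWt x : ℝ) ≤ n / 3) with hA
  set B := Finset.univ.filter (fun x => ¬ ((hammingWt x : ℝ) ≤ n / 3) ∧ ¬ ((hammingWt x : ℝ) < 2 * n / 3)) with hB
  have hMbound : (∑ x ∈ M, p x) * (h * ((n : ℝ) / 3)) ≤ h / 6 * n := by
    refine le_trans ?_ hlow
    rw [Finset.sum_mul]
    refine le_trans (Finset.sum_le_sum ?_)
      (Finset.sum_le_sum_of_subset_of_nonneg (Finset.subset_univ M) ?_)
    · intro x hx
      rw [hM, Finset.mem_filter] at hx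
      exact mul_le_mul_of_nonneg_left (key x hx.2.1 hx.2.2) (hp0 x)
    · intro x _ _
      exact mul_nonneg (hp0 x) (Nat.cast_nonneg _)
  have hhn : (0 : ℝ) < h * n := mul_pos hh hn'
  have hMle : ∑ x ∈ M, p x ≤ 1 / 2 := by nlinarith [hMbound, hhn]
  have hsplit1 : (∑ x ∈ A, p x)
      + ∑ x ∈ Finset.univ.filter (fun x => ¬ ((hammingWt x : ℝ) ≤ n / 3)), p x = 1 := by
    rw [hA, Finset.sum_filter_add_sum_filter_not]; exact hp1
  have hsplit2 : ∑ x ∈ Finset.univ.filter (fun x => ¬ ((hammingWt x : ℝ) ≤ n / 3)), p x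
      = (∑ x ∈ M, p x) + ∑ x ∈ B, p x := by
    rw [← Finset.sum_filter_add_sum_filter_not
      (Finset.univ.filter (fun x => ¬ ((hammingWt x : ℝ) ≤ n / 3)))
      (fun x => (hammingWt x : ℝ) < 2 * n / 3), Finset.filter_filter, Finset.filter_filter,
      hM, hB]
  have hcastgen : ∀ x : Fin n → Bool, (hammingWt (fun j => ! x j) : ℝ) = n - hammingWt x := by
    intro x; rw [hammingWt_not]; push_cast [Nat.cast_sub (hammingWt_le x)]; ring
  have hBA : ∑ x ∈ B, p x = ∑ x ∈ A, p x := by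
    refine Finset.sum_nbij' (fun x => fun j => ! x j) (fun x => fun j => ! x j) ?_ ?_ ?_ ?_ ?_
    · intro x hx
      simp only [hB, hA, Finset.mem_filter, Finset.mem_univ, true_and, not_le, not_lt] at hx ⊢
      rw [hcastgen x]
      linarith [hx.1, hx.2]
    · intro x hx
      simp only [hA, hB, Finset.mem_filter, Finset.mem_univ, true_and, not_le, not_lt] at hx ⊢
      rw [hcastgen x]
      constructor <;> linarith
    · intro x _; funext j; simp
    · intro x _; funext j; simp
    · intro x _; exact hsym x
  have hA4 : 1 / 4 ≤ ∑ x ∈ A, p x := by linarith [hsplit1, hsplit2, hBA, hMle]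
  -- conclude numerically
  set C : ℝ := (2 : ℝ) ^ ((3 * (d : ℝ)) / 2) with hC
  have hCpos : (0 : ℝ) < C := Real.rpow_pos_of_pos two_pos _
  have hxpos : (0 : ℝ) < (n : ℝ) ^ ((1 : ℝ) / 2) := Real.rpow_pos_of_pos hn' _
  have hrw : (n : ℝ) ^ (-(1 : ℝ) / 2) = ((n : ℝ) ^ ((1 : ℝ) / 2))⁻¹ := by
    rw [show (-(1 : ℝ) / 2) = -((1 : ℝ) / 2) by ring, Real.rpow_neg hn'.le]
  have hq : 1 / 4 ≤ 12 * C * ((n : ℝ) ^ ((1 : ℝ) / 2))⁻¹ := by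
    rw [← hrw]; exact le_trans hA4 hlight
  have h48 : (n : ℝ) ^ ((1 : ℝ) / 2) ≤ 48 * C := by
    have := mul_le_mul_of_nonneg_right hq hxpos.le
    rw [mul_assoc, inv_mul_cancel₀ hxpos.ne', mul_one] at this
    linarith
  have hsq := mul_self_le_mul_self hxpos.le h48
  have hleft : (n : ℝ) ^ ((1 : ℝ) / 2) * (n : ℝ) ^ ((1 : ℝ) / 2) = n := by
    rw [← Real.rpow_add hn']; norm_num
  have hCC : C * C = ((8 : ℕ) : ℝ) ^ d := by
    rw [hC, ← Real.rpow_add two_pos]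
    rw [show (3 * (d : ℝ)) / 2 + (3 * (d : ℝ)) / 2 = ((3 * d : ℕ) : ℝ) by push_cast; ring]
    rw [Real.rpow_natCast, pow_mul]
    norm_num
  have hfinal : (n : ℝ) ≤ ((48 ^ 2 * 8 ^ d : ℕ) : ℝ) := by
    rw [hleft] at hsq
    have : (48 : ℝ) * C * (48 * C) = 48 ^ 2 * (C * C) := by ring
    rw [this, hCC] at hsq
    push_cast
    push_cast at hsq
    linarith
  exact_mod_cast hfinal
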